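/- Let B be the weighted Büchi automaton constructed from non-blocking generalized Büchi automata G_1, …, G_n with rewards rew_1 ≥ … ≥ rew_n. Let I ⊆ {1,…,n} and let w be an infinite word over Σ such that w ∈ L(G_i) for every i ∈ I and w ∉ L(G_i) for every i ∉ I. Then every accepting run ρ' of B over w satisfies C(ρ') ≤ Σ_{i∈I} rew_i. -/

import Mathlib

/-! Common definitions: labeled transition systems, Büchi automata,
generalized Büchi automata, products, weighted runs, fragments, rewards. -/

/-- A labeled transition system `T = (S, s_init, R, L)`. -/
structure LTS (S : Type*) (A : Type*) where
  init : S
  trans : Set (S × S)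
  label : S → A

namespace LTS

/-- An (infinite) trace of a transition system. -/
def IsTrace {S A : Type*} (T : LTS S A) (τ : ℕ → S) : Prop :=
  τ 0 = T.init ∧ ∀ i, (τ i, τ (i + 1)) ∈ T.trans

/-- The word produced by a trace. -/
def word {S A : Type*} (T : LTS S A) (τ : ℕ → S) : ℕ → A :=
  fun i => T.label (τ i)

end LTS

/-- A Büchi automaton `(Q, q_init, Σ, δ, F)`. -/
structure BA (Q : Type*) (A : Type*) where
  init : Q
  trans : Set (Q × A × Q)
  acc : Set Q

namespace BA

/-- A run of a Büchi automaton over an infinite word. -/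
def IsRun {Q A : Type*} (M : BA Q A) (w : ℕ → A) (ρ : ℕ → Q) : Prop :=
  ρ 0 = M.init ∧ ∀ i, (ρ i, w i, ρ (i + 1)) ∈ M.trans

/-- A run is accepting if it visits the accepting set infinitely often. -/
def IsAccepting {Q A : Type*} (M : BA Q A) (ρ : ℕ → Q) : Prop :=
  ∀ N, ∃ i, N ≤ i ∧ ρ i ∈ M.acc

/-- The language of a Büchi automaton. -/
def Lang {Q A : Type*} (M : BA Q A) : Set (ℕ → A) :=
  {w | ∃ ρ, M.IsRun w ρ ∧ M.IsAccepting ρ}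

/-- A Büchi automaton is non-blocking if every state has a successor on every letter. -/
def NonBlocking {Q A : Type*} (M : BA Q A) : Prop :=
  ∀ q σ, ∃ q', (q, σ, q') ∈ M.trans

end BA

/-- A generalized Büchi automaton with `m` acceptance sets `F_1, …, F_m`
(0-indexed as `acc 0, …, acc (m-1)`). -/
structure GBA (Q : Type*) (A : Type*) (m : ℕ) where
  init : Q
  trans : Set (Q × A × Q)
  acc : Fin m → Set Q

namespace GBA

/-- A run of a generalized Büchi automaton over an infinite word. -/
def IsRun {Q A : Type*} {m : ℕ} (M : GBA Q A m) (w : ℕ → A) (ρ : ℕ → Q) : Prop :=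
  ρ 0 = M.init ∧ ∀ i, (ρ i, w i, ρ (i + 1)) ∈ M.trans

/-- A run is accepting if it visits each acceptance set infinitely often. -/
def IsAccepting {Q A : Type*} {m : ℕ} (M : GBA Q A m) (ρ : ℕ → Q) : Prop :=
  ∀ l : Fin m, ∀ N, ∃ i, N ≤ i ∧ ρ i ∈ M.acc l

/-- The language of a generalized Büchi automaton. -/
def Lang {Q A : Type*} {m : ℕ} (M : GBA Q A m) : Set (ℕ → A) :=
  {w | ∃ ρ, M.IsRun w ρ ∧ M.IsAccepting ρ}

/-- A GBA is non-blocking if every state has a successor on every letter. -/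
def NonBlocking {Q A : Type*} {m : ℕ} (M : GBA Q A m) : Prop :=
  ∀ q σ, ∃ q', (q, σ, q') ∈ M.trans

end GBA

/-- Transitions of the product automaton `P = T ⊗ B`. -/
def ProdTrans {S A Q : Type*} (T : LTS S A) (M : BA Q A) : Set ((S × Q) × (S × Q)) :=
  {t | (t.1.1, t.2.1) ∈ T.trans ∧ (t.1.2, T.label t.1.1, t.2.2) ∈ M.trans}

/-- Accepting states `F_P = S × F` of the product automaton. -/
def ProdAcc {S A Q : Type*} (_T : LTS S A) (M : BA Q A) : Set (S × Q) :=
  {p | p.2 ∈ M.acc}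

/-- A run of the product automaton `P = T ⊗ B`. -/
def IsProdRun {S A Q : Type*} (T : LTS S A) (M : BA Q A) (ρ : ℕ → S × Q) : Prop :=
  ρ 0 = (T.init, M.init) ∧ ∀ i, (ρ i, ρ (i + 1)) ∈ ProdTrans T M

/-- An accepting run of the product automaton (visits `F_P` infinitely often). -/
def IsProdAccepting {S A Q : Type*} (T : LTS S A) (M : BA Q A) (ρ : ℕ → S × Q) : Prop :=
  ∀ N, ∃ i, N ≤ i ∧ ρ i ∈ ProdAcc T M

/-- The weight of the `j`-th step of a sequence of product states, where `W` is the
weight function of the underlying weighted Büchi automaton: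
`W_P(((s,q),(s',q'))) = W((q, L(s), q'))`. -/
def ProdStepW {S A Q : Type*} (T : LTS S A) (W : Q → A → Q → ℕ) (ρ : ℕ → S × Q)
    (j : ℕ) : ℕ :=
  W (ρ j).2 (T.label (ρ j).1) (ρ (j + 1)).2

/-- `ρ i … ρ k` is a fragment of the infinite run `ρ` (w.r.t. accepting set `F`):
both endpoints are accepting and no interior state is accepting. -/
def IsFragment {X : Type*} (F : Set X) (ρ : ℕ → X) (i k : ℕ) : Prop :=
  i < k ∧ ρ i ∈ F ∧ ρ k ∈ F ∧ ∀ j, i < j → j < k → ρ j ∉ F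

/-- Total weight of the segment from position `i` to position `k`, where `stepW j`
is the weight of the transition taken at position `j`. -/
def SegWeight (stepW : ℕ → ℕ) (i k : ℕ) : ℕ :=
  ∑ j ∈ Finset.Ico i k, stepW j

/-- The reward `C(ρ)` of the run `ρ` equals `c`: `c` is the maximum value that occurs
infinitely often in the sequence of fragment weights of `ρ`, i.e. fragments of weight `c`
occur infinitely often, and every value `v > c` occurs only finitely often. -/
def RunRewardIs {X : Type*} (F : Set X) (ρ : ℕ → X) (stepW : ℕ → ℕ) (c : ℕ) : Prop :=
  (∀ N, ∃ i k, N ≤ i ∧ IsFragment F ρ i k ∧ SegWeight stepW i k = c) ∧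
  (∀ v, c < v → ∃ N, ∀ i k, N ≤ i → IsFragment F ρ i k → SegWeight stepW i k ≠ v)

/-- A run is in prefix-suffix structure `ρ_pref · (ρ_suf)^ω` (with the first state
of `ρ_suf` accepting) iff it is eventually periodic with an accepting state at the
start of the periodic part. -/
def IsPrefixSuffix {X : Type*} (F : Set X) (ρ : ℕ → X) : Prop :=
  ∃ l k, 0 < k ∧ ρ l ∈ F ∧ ∀ i, l ≤ i → ρ (i + k) = ρ i

/-- `f 0 f 1 … f k` is a finite path w.r.t. the edge relation `E`. -/
def IsFinPath {X : Type*} (E : Set (X × X)) (f : ℕ → X) (k : ℕ) : Prop :=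
  ∀ t, t < k → (f t, f (t + 1)) ∈ E

/-- A fragment of a finite cycle `f 0 … f k`: a segment whose endpoints lie in `F` and
whose interior states do not. -/
def IsCycFrag {X : Type*} (F : Set X) (f : ℕ → X) (k i k' : ℕ) : Prop :=
  i < k' ∧ k' ≤ k ∧ f i ∈ F ∧ f k' ∈ F ∧ ∀ t, i < t → t < k' → f t ∉ F

section Construction

/-- The component set `C = {(j,l) : 1 ≤ j ≤ n, 1 ≤ l ≤ m_j} ∪ {(0,0)}` of the weighted
Büchi automaton `B`; `none` plays the role of `(0,0)` and `some ⟨j,l⟩` (0-indexed) the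
role of the component `(j+1, l+1)`. -/
abbrev BComp (n : ℕ) (m : Fin n → ℕ) : Type :=
  Option (Σ j : Fin n, Fin (m j))

variable {A : Type*} {n : ℕ} {Qs : Fin n → Type*} {m : Fin n → ℕ}

/-- The allowed moves between components of the weighted Büchi automaton `B`
(cases (1a), (1b), (2a), (2b), (2c), (2d)); `q` is the source tuple of GBA states. -/
def CompStep (G : ∀ j, GBA (Qs j) A (m j)) (q : ∀ j, Qs j) :
    BComp n m → BComp n m → Prop
  | none, none => True
  | none, some jl' => (jl'.2 : ℕ) = 0
  | some jl, none => (jl.2 : ℕ) + 1 = m jl.1 ∧ q jl.1 ∈ (G jl.1).acc jl.2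
  | some jl, some jl' =>
      (jl'.1 = jl.1 ∧ (jl'.2 : ℕ) = (jl.2 : ℕ) ∧ q jl.1 ∉ (G jl.1).acc jl.2) ∨
      (jl'.1 = jl.1 ∧ (jl'.2 : ℕ) = (jl.2 : ℕ) + 1 ∧ q jl.1 ∈ (G jl.1).acc jl.2) ∨
      ((jl.1 : ℕ) < (jl'.1 : ℕ) ∧ (jl.2 : ℕ) + 1 = m jl.1 ∧ (jl'.2 : ℕ) = 0 ∧
        q jl.1 ∈ (G jl.1).acc jl.2)

/-- The weight of a transition of `B`, determined by the source and target components: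
`rew j'` when newly entering the first component of layer `j'` (cases (1b), (2c)),
and `0` otherwise. -/
def CompWeight (rew : Fin n → ℕ) : BComp n m → BComp n m → ℕ
  | _, none => 0
  | c, some jl' => if (jl'.2 : ℕ) = 0 ∧ c ≠ some jl' then rew jl'.1 else 0

/-- The weighted Büchi automaton `B` built from the non-blocking GBAs `G 0, …, G (n-1)`:
state set `Q_1 × … × Q_n × C`, initial state `(q_init,1, …, q_init,n, (0,0))`,
accepting set `Q_1 × … × Q_n × {(0,0)}`. -/
def BAut (G : ∀ j, GBA (Qs j) A (m j)) (_rew : Fin n → ℕ) :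
    BA ((∀ j, Qs j) × BComp n m) A where
  init := (fun j => (G j).init, none)
  trans := {t | (∀ j, (t.1.1 j, t.2.1, t.2.2.1 j) ∈ (G j).trans) ∧
              CompStep G t.1.1 t.1.2 t.2.2.2}
  acc := {p | p.2 = none}

/-- The weight function `W : δ → ℕ` of the weighted Büchi automaton `B`. -/
def BWeight (rew : Fin n → ℕ) (p : (∀ j, Qs j) × BComp n m) (_ : A)
    (p' : (∀ j, Qs j) × BComp n m) : ℕ :=
  CompWeight rew p.2 p'.2

open Classical in
/-- The reward of a trace `τ` of `T`: `Rew(τ) = Σ_{i, w(τ) ∈ L(G_i)} rew_i`. -/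
noncomputable def TraceRew {S : Type*} (T : LTS S A) (G : ∀ j, GBA (Qs j) A (m j))
    (rew : Fin n → ℕ) (τ : ℕ → S) : ℕ :=
  ∑ j : Fin n, if T.word τ ∈ (G j).Lang then rew j else 0

end Construction


section Helpers

variable {A : Type*} {n : ℕ} {Qs : Fin n → Type*} {m : Fin n → ℕ}

/-- The component `c` lies in layer `j`. -/
def InLayer (j : Fin n) (c : BComp n m) : Prop := ∃ l, c = some ⟨j, l⟩

lemma sig_eq {jl jl' : Σ j : Fin n, Fin (m j)} (h1 : jl'.1 = jl.1)
    (h2 : (jl'.2 : ℕ) = (jl.2 : ℕ)) : jl' = jl := by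
  obtain ⟨a, b⟩ := jl
  obtain ⟨a', b'⟩ := jl'
  simp only at h1
  subst h1
  simp only at h2
  simp [Fin.ext h2]

variable {G : ∀ j, GBA (Qs j) A (m j)} {rew : Fin n → ℕ}
  {w : ℕ → A} {ρ : ℕ → (∀ j, Qs j) × BComp n m}

lemma run_trans (hρ : (BAut G rew).IsRun w ρ) (t : ℕ) :
    (∀ j, ((ρ t).1 j, w t, (ρ (t+1)).1 j) ∈ (G j).trans) ∧
      CompStep G (ρ t).1 (ρ t).2 (ρ (t+1)).2 := hρ.2 t

lemma step_some_some (hρ : (BAut G rew).IsRun w ρ) (t : ℕ)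
    {jl jl' : Σ j : Fin n, Fin (m j)}
    (h1 : (ρ t).2 = some jl) (h2 : (ρ (t+1)).2 = some jl') :
    (jl' = jl ∧ (ρ t).1 jl.1 ∉ (G jl.1).acc jl.2) ∨
    (jl'.1 = jl.1 ∧ (jl'.2 : ℕ) = (jl.2 : ℕ) + 1 ∧ (ρ t).1 jl.1 ∈ (G jl.1).acc jl.2) ∨
    ((jl.1 : ℕ) < (jl'.1 : ℕ) ∧ (jl.2 : ℕ) + 1 = m jl.1 ∧ (jl'.2 : ℕ) = 0 ∧
      (ρ t).1 jl.1 ∈ (G jl.1).acc jl.2) := by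
  have h := (run_trans hρ t).2
  rw [h1, h2] at h
  simp only [CompStep] at h
  rcases h with ⟨ha, hb, hcn⟩ | h | h
  · exact Or.inl ⟨sig_eq ha hb, hcn⟩
  · exact Or.inr (Or.inl h)
  · exact Or.inr (Or.inr ⟨h.1, h.2.1, h.2.2⟩)

lemma step_exit (hρ : (BAut G rew).IsRun w ρ) (t : ℕ)
    {jl : Σ j : Fin n, Fin (m j)} (h1 : (ρ t).2 = some jl)
    (h2 : ¬ InLayer jl.1 ((ρ (t+1)).2)) :
    (jl.2 : ℕ) + 1 = m jl.1 ∧ (ρ t).1 jl.1 ∈ (G jl.1).acc jl.2 := by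
  have h := (run_trans hρ t).2
  rw [h1] at h
  rcases hcc : (ρ (t+1)).2 with _ | jl'
  · rw [hcc] at h
    exact h
  · rw [hcc] at h
    rcases step_some_some hρ t h1 hcc with ⟨ha, _⟩ | ⟨ha, _⟩ | ⟨_, hb, hc2, hd⟩
    · rw [ha] at hcc
      exact absurd ⟨jl.2, hcc⟩ h2
    · refine absurd ?_ h2
      obtain ⟨a, b⟩ := jl'
      simp only at ha
      subst ha
      exact ⟨b, hcc⟩
    · exact ⟨hb, hd⟩

lemma step_entry (hρ : (BAut G rew).IsRun w ρ) (t : ℕ)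
    {jl' : Σ j : Fin n, Fin (m j)} (h2 : (ρ (t+1)).2 = some jl')
    (h1 : ¬ InLayer jl'.1 ((ρ t).2)) : (jl'.2 : ℕ) = 0 := by
  have h := (run_trans hρ t).2
  rw [h2] at h
  rcases hcc : (ρ t).2 with _ | jl
  · rw [hcc] at h
    exact h
  · rw [hcc] at h
    rcases step_some_some hρ t hcc h2 with ⟨ha, _⟩ | ⟨ha, _⟩ | ⟨_, _, hc2, _⟩
    · subst ha
      exact absurd ⟨jl'.2, hcc⟩ h1
    · refine absurd ?_ h1
      obtain ⟨a, b⟩ := jl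
      simp only at ha
      subst ha
      exact ⟨b, hcc⟩
    · exact hc2

/-- After entering layer `j` at level `0`, before leaving the layer the projected run
visits every acceptance set of `G j`. -/
lemma stay_acc (hρ : (BAut G rew).IsRun w ρ)
    (hacc : (BAut G rew).IsAccepting ρ) (j : Fin n) (t : ℕ)
    {l0 : Fin (m j)} (h0 : (ρ t).2 = some ⟨j, l0⟩) (hl0 : (l0 : ℕ) = 0) :
    ∀ l : Fin (m j), ∃ s, t ≤ s ∧ (ρ s).1 j ∈ (G j).acc l := by
  classical
  obtain ⟨k, hk1, hk2⟩ := hacc (t + 1)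
  have hk2' : (ρ k).2 = none := hk2
  have hPex : ∃ s, t < s ∧ ¬ InLayer j ((ρ s).2) := by
    refine ⟨k, by omega, ?_⟩
    rintro ⟨l, hl⟩
    rw [hk2'] at hl
    exact Option.some_ne_none _ hl.symm
  set E := Nat.find hPex with hE
  have hE1 : t < E := (Nat.find_spec hPex).1
  have hEmin : ∀ s, t < s → s < E → InLayer j ((ρ s).2) := by
    intro s hs1 hs2
    by_contra hcon
    exact absurd ⟨hs1, hcon⟩ (Nat.find_min hPex hs2)
  have Φ : ∀ d s, E - s = d → t ≤ s → s < E → ∀ l : Fin (m j),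
      (ρ s).2 = some ⟨j, l⟩ →
      (∃ s', s ≤ s' ∧ (ρ s').1 j ∈ (G j).acc l) ∧
      ((l : ℕ) + 1 = m j ∨ ∃ s', ∃ l' : Fin (m j), s < s' ∧ s' < E ∧
        (l' : ℕ) = (l : ℕ) + 1 ∧ (ρ s').2 = some ⟨j, l'⟩) := by
    intro d
    induction d using Nat.strong_induction_on with
    | _ d ih =>
      intro s hd hts hsE l hcomp
      by_cases hcase : s + 1 = E
      · have hexit : ¬ InLayer j ((ρ (s+1)).2) := by
          rw [hcase]
          exact (Nat.find_spec hPex).2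
        have := step_exit hρ s hcomp hexit
        exact ⟨⟨s, le_rfl, this.2⟩, Or.inl this.1⟩
      · have hs1E : s + 1 < E := by omega
        obtain ⟨l', hcomp'⟩ := hEmin (s+1) (by omega) hs1E
        rcases step_some_some hρ s hcomp hcomp' with ⟨ha, _⟩ | ⟨_, hb, hc2⟩ | ⟨ha, _⟩
        · -- stay at same level
          have hll : (⟨j, l'⟩ : Σ j : Fin n, Fin (m j)) = ⟨j, l⟩ := ha
          rw [hll] at hcomp'
          obtain ⟨⟨s', hs'1, hs'2⟩, hrest⟩ :=
            ih (E - (s+1)) (by omega) (s+1) rfl (by omega) hs1E l hcomp'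
          refine ⟨⟨s', by omega, hs'2⟩, ?_⟩
          rcases hrest with h | ⟨s'', l'', h1, h2, h3, h4⟩
          · exact Or.inl h
          · exact Or.inr ⟨s'', l'', by omega, h2, h3, h4⟩
        · -- level increments, acceptance witnessed
          exact ⟨⟨s, le_rfl, hc2⟩, Or.inr ⟨s+1, l', by omega, hs1E, hb, hcomp'⟩⟩
        · simp at ha
  have reach : ∀ ln, ln < m j → ∃ s, ∃ l : Fin (m j), t ≤ s ∧ s < E ∧
      (l : ℕ) = ln ∧ (ρ s).2 = some ⟨j, l⟩ := by
    intro ln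
    induction ln with
    | zero => exact fun _ => ⟨t, l0, le_rfl, hE1, hl0, h0⟩
    | succ p ihp =>
      intro hlt
      obtain ⟨s, l, hts, hsE, hlp, hcomp⟩ := ihp (by omega)
      obtain ⟨_, h2⟩ := Φ (E - s) s rfl hts hsE l hcomp
      rcases h2 with h2 | ⟨s', l', hss', hs'E, hl', hcomp'⟩
      · omega
      · exact ⟨s', l', by omega, hs'E, by omega, hcomp'⟩
  intro l
  obtain ⟨s, l1, hts, hsE, hval, hcomp⟩ := reach (l : ℕ) l.isLt
  have : l1 = l := Fin.ext hval
  subst this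
  obtain ⟨⟨s', hs'1, hs'2⟩, _⟩ := Φ (E - s) s rfl hts hsE l1 hcomp
  exact ⟨s', by omega, hs'2⟩

/-- If layer `j` is occupied infinitely often then `w ∈ L(G j)`. -/
lemma lang_of_inf (hρ : (BAut G rew).IsRun w ρ)
    (hacc : (BAut G rew).IsAccepting ρ) (j : Fin n)
    (hj : ∀ N, ∃ t, N ≤ t ∧ InLayer j ((ρ t).2)) : w ∈ (G j).Lang := by
  classical
  refine ⟨fun t => (ρ t).1 j, ⟨?_, fun t => (run_trans hρ t).1 j⟩, ?_⟩
  · exact congrFun (congrArg Prod.fst hρ.1) j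
  · intro l N
    obtain ⟨t1, ht1N, ht1mem⟩ := hacc N
    have ht1 : (ρ t1).2 = none := ht1mem
    obtain ⟨t, htt1, htL⟩ := hj (t1 + 1)
    have hPex : ∃ s, t1 < s ∧ InLayer j ((ρ s).2) := ⟨t, by omega, htL⟩
    set t2 := Nat.find hPex with ht2
    have hsp := Nat.find_spec hPex
    have ht2pos : t1 < t2 := hsp.1
    obtain ⟨l2, hl2⟩ := hsp.2
    have hprev : ¬ InLayer j ((ρ (t2 - 1)).2) := by
      intro hL
      by_cases hcase : t1 < t2 - 1
      · exact absurd ⟨hcase, hL⟩ (Nat.find_min hPex (by omega))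
      · have heq : t2 - 1 = t1 := by omega
        rw [heq, ht1] at hL
        obtain ⟨l', hl'⟩ := hL
        exact Option.some_ne_none _ hl'.symm
    have ht2eq : t2 - 1 + 1 = t2 := by omega
    have hl20 : (l2 : ℕ) = 0 := by
      have := step_entry hρ (t2 - 1) (jl' := ⟨j, l2⟩) (by rw [ht2eq]; exact hl2) hprev
      exact this
    obtain ⟨s, hs1, hs2⟩ := stay_acc hρ hacc j t2 hl2 hl20 l
    exact ⟨s, by omega, hs2⟩

/-- Within a fragment, layers are monotone. -/
lemma layer_mono (hρ : (BAut G rew).IsRun w ρ) {i k : ℕ}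
    (hfrag : IsFragment (BAut G rew).acc ρ i k) :
    ∀ d t1, i < t1 → t1 + d < k → ∀ (jl1 jl2 : Σ j : Fin n, Fin (m j)),
      (ρ t1).2 = some jl1 → (ρ (t1 + d)).2 = some jl2 →
      (jl1.1 : ℕ) ≤ (jl2.1 : ℕ) := by
  intro d
  induction d with
  | zero =>
    intro t1 _ _ jl1 jl2 h1 h2
    simp only [Nat.add_zero] at h2
    rw [h1] at h2
    rw [Option.some_inj.mp h2]
  | succ p ihp =>
    intro t1 hit1 hk jl1 jl2 h1 h2
    have hmidI : i < t1 + p := by omega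
    have hmidK : t1 + p < k := by omega
    have hmidne : (ρ (t1 + p)).2 ≠ none := by
      intro hcon
      exact hfrag.2.2.2 (t1 + p) hmidI hmidK hcon
    rcases hmid : (ρ (t1 + p)).2 with _ | jlmid
    · exact absurd hmid hmidne
    · have hle1 : (jl1.1 : ℕ) ≤ (jlmid.1 : ℕ) := ihp t1 hit1 (by omega) jl1 jlmid h1 hmid
      have h2' : (ρ (t1 + p + 1)).2 = some jl2 := by
        rw [show t1 + p + 1 = t1 + (p + 1) by omega]; exact h2
      rcases step_some_some hρ (t1 + p) hmid h2' with ⟨ha, _⟩ | ⟨ha, _⟩ | ⟨ha, _⟩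
      · rw [ha]; exact hle1
      · rw [ha]; exact hle1
      · omega

lemma compWeight_ne {c c' : BComp n m} (h : CompWeight rew c c' ≠ 0) :
    ∃ jl' : Σ j : Fin n, Fin (m j), c' = some jl' ∧ (jl'.2 : ℕ) = 0 ∧
      c ≠ some jl' ∧ CompWeight rew c c' = rew jl'.1 := by
  rcases c' with _ | jl'
  · simp [CompWeight] at h
  · by_cases h1 : (jl'.2 : ℕ) = 0 ∧ c ≠ some jl'
    · exact ⟨jl', rfl, h1.1, h1.2, by simp [CompWeight, h1]⟩
    · exact absurd (by simp [CompWeight, if_neg h1]) h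

end Helpers

/-- if `w ∈ L(G_i)` exactly for `i ∈ I`, then every accepting run `ρ'` of
`B` over `w` satisfies `C(ρ') ≤ Σ_{i∈I} rew_i`. -/
theorem statement7 {A : Type*} [Finite A] {n : ℕ} {Qs : Fin n → Type*}
    [∀ j, Finite (Qs j)] {m : Fin n → ℕ} (hm : ∀ j, 0 < m j)
    (G : ∀ j, GBA (Qs j) A (m j)) (hnb : ∀ j, (G j).NonBlocking)
    (rew : Fin n → ℕ) (hrew : ∀ i j : Fin n, i ≤ j → rew j ≤ rew i)
    (I : Finset (Fin n)) (w : ℕ → A)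
    (hin : ∀ i ∈ I, w ∈ (G i).Lang) (hout : ∀ i ∉ I, w ∉ (G i).Lang)
    (ρ : ℕ → (∀ j, Qs j) × BComp n m) (c : ℕ)
    (hρ : (BAut G rew).IsRun w ρ) (hacc : (BAut G rew).IsAccepting ρ)
    (hc : RunRewardIs (BAut G rew).acc ρ
      (fun j => BWeight rew (ρ j) (w j) (ρ (j + 1))) c) :
    c ≤ ∑ i ∈ I, rew i := by
  classical
  set S : Finset (Fin n) :=
    Finset.univ.filter (fun j => ∀ N, ∃ t, N ≤ t ∧ InLayer j ((ρ t).2)) with hS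
  have hSI : S ⊆ I := by
    intro j hj
    have hj' : ∀ N, ∃ t, N ≤ t ∧ InLayer j ((ρ t).2) := (Finset.mem_filter.mp hj).2
    by_contra hnI
    exact hout j hnI (lang_of_inf hρ hacc j hj')
  have hchoice : ∀ j : Fin n, ∃ Nj : ℕ,
      j ∈ S ∨ ∀ t, Nj ≤ t → ¬ InLayer j ((ρ t).2) := by
    intro j
    by_cases hj : j ∈ S
    · exact ⟨0, Or.inl hj⟩
    · have h1 : ¬ ∀ N, ∃ t, N ≤ t ∧ InLayer j ((ρ t).2) := fun h =>
        hj (Finset.mem_filter.mpr ⟨Finset.mem_univ _, h⟩)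
      push_neg at h1
      obtain ⟨N, hN⟩ := h1
      exact ⟨N, Or.inr hN⟩
  choose Nf hNf using hchoice
  set N0 := Finset.univ.sup Nf with hN0def
  have hN0 : ∀ t, N0 ≤ t → ∀ jl : Σ j : Fin n, Fin (m j),
      (ρ t).2 = some jl → jl.1 ∈ S := by
    intro t ht jl hjl
    rcases hNf jl.1 with h | h
    · exact h
    · exact absurd ⟨jl.2, hjl⟩
        (h t (le_trans (Finset.le_sup (Finset.mem_univ jl.1)) ht))
  obtain ⟨i, k, hiN, hfrag, hwc⟩ := hc.1 N0
  rw [← hwc]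
  set stepW : ℕ → ℕ := fun t => BWeight rew (ρ t) (w t) (ρ (t + 1)) with hstepW
  set T : Finset ℕ := (Finset.Ico i k).filter (fun t => stepW t ≠ 0) with hT
  have key : ∀ t ∈ T, ∃ jl : Σ j : Fin n, Fin (m j),
      (ρ (t+1)).2 = some jl ∧ (jl.2 : ℕ) = 0 ∧ (ρ t).2 ≠ some jl ∧
      stepW t = rew jl.1 := by
    intro t ht
    have hne : stepW t ≠ 0 := (Finset.mem_filter.mp ht).2
    exact compWeight_ne hne
  set g : ℕ → Option (Fin n) := fun t => Option.map Sigma.fst ((ρ (t+1)).2) with hg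
  have strict : ∀ t1 ∈ T, ∀ t2 ∈ T, t1 < t2 →
      ∀ jl1 jl2 : Σ j : Fin n, Fin (m j),
      (ρ (t1+1)).2 = some jl1 → (ρ (t2+1)).2 = some jl2 →
      (jl1.1 : ℕ) < (jl2.1 : ℕ) := by
    intro t1 ht1 t2 ht2 hlt jl1 jl2 h1 h2
    have hm1 := Finset.mem_Ico.mp (Finset.mem_filter.mp ht1).1
    have hm2 := Finset.mem_Ico.mp (Finset.mem_filter.mp ht2).1
    have ht2i : i < t2 := by omega
    have hnone : (ρ t2).2 ≠ none := fun hcon => hfrag.2.2.2 t2 ht2i hm2.2 hcon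
    rcases hmid : (ρ t2).2 with _ | jlmid
    · exact absurd hmid hnone
    obtain ⟨jl2', h2', hz, hneq, _⟩ := key t2 ht2
    rw [h2] at h2'
    obtain rfl : jl2 = jl2' := Option.some_inj.mp h2'
    rcases step_some_some hρ t2 hmid h2 with ⟨ha, _⟩ | ⟨_, hb, _⟩ | ⟨ha, _⟩
    · exact absurd (by rw [hmid, ha]) hneq
    · omega
    · have hmono := layer_mono hρ hfrag (t2 - (t1+1)) (t1+1) (by omega)
        (by omega) jl1 jlmid h1
        (by rw [show t1 + 1 + (t2 - (t1+1)) = t2 by omega]; exact hmid)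
      omega
  have hinj : ∀ t1 ∈ T, ∀ t2 ∈ T, g t1 = g t2 → t1 = t2 := by
    intro t1 ht1 t2 ht2 heq
    obtain ⟨jl1, h1, _, _, _⟩ := key t1 ht1
    obtain ⟨jl2, h2, _, _, _⟩ := key t2 ht2
    have hgg : jl1.1 = jl2.1 := by
      simp only [hg, h1, h2, Option.map_some] at heq
      exact Option.some_inj.mp heq
    have hvv : (jl1.1 : ℕ) = (jl2.1 : ℕ) := congrArg Fin.val hgg
    rcases lt_trichotomy t1 t2 with h | h | h
    · have := strict t1 ht1 t2 ht2 h jl1 jl2 h1 h2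
      omega
    · exact h
    · have := strict t2 ht2 t1 ht1 h jl2 jl1 h2 h1
      omega
  have himg : T.image g ⊆ S.image some := by
    intro o ho
    obtain ⟨t, ht, rfl⟩ := Finset.mem_image.mp ho
    obtain ⟨jl, h1, _, _, _⟩ := key t ht
    have hmem := Finset.mem_Ico.mp (Finset.mem_filter.mp ht).1
    have hjS : jl.1 ∈ S := hN0 (t+1) (by omega) jl h1
    exact Finset.mem_image.mpr ⟨jl.1, hjS, by simp [hg, h1]⟩
  calc SegWeight stepW i k
      = ∑ t ∈ T, stepW t := (Finset.sum_filter_ne_zero _).symm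
    _ = ∑ t ∈ T, (g t).elim 0 rew := by
        refine Finset.sum_congr rfl (fun t ht => ?_)
        obtain ⟨jl, h1, _, _, hwt⟩ := key t ht
        rw [hwt]
        simp [hg, h1]
    _ = ∑ o ∈ T.image g, o.elim 0 rew := by
        rw [Finset.sum_image hinj]
    _ ≤ ∑ o ∈ S.image some, o.elim 0 rew := by
        refine Finset.sum_le_sum_of_subset himg
    _ = ∑ j ∈ S, rew j := Finset.sum_image (fun x _ y _ h => Option.some_inj.mp h)
    _ ≤ ∑ j ∈ I, rew j := Finset.sum_le_sum_of_subset hSI
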